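/- arXiv:1205.6627 — 3 statements merged into one kernel-verified Lean document; each statement's English description precedes it below -/
import Mathlib

section
/- Let Y ⊆ X, let α : Y → R satisfy α y ≠ 0 for all y ∈ Y, and set g = Σ_{y∈Y} α y • ι y. Let β : X → R and set h = Σ_{x∈X} β x • ι x. Then ⁅g, h⁆ = 0 in L if and only if both of the following hold: (1) for every connected component C of the complement graph on Y there exist λ, μ ∈ R, not both zero, with λ * α y = μ * β y for all y ∈ C; and (2) for every z ∈ X \ Y with β z ≠ 0 and every y ∈ Y one has Adj z y. -/
noncomputable section

/-- The Lie ideal of relations of the partially commutative Lie algebra: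
it is generated by the brackets `⁅x, y⁆` of generators with `G.Adj x y`. -/
def pcIdeal (R : Type*) [CommRing R] {X : Type*} (G : SimpleGraph X) :
    LieIdeal R (FreeLieAlgebra R X) :=
  LieSubmodule.lieSpan R (FreeLieAlgebra R X)
    {w | ∃ x y : X, G.Adj x y ∧ w = ⁅FreeLieAlgebra.of R x, FreeLieAlgebra.of R y⁆}

/-- The partially commutative Lie algebra `L_R(X; G)`. -/
abbrev PCLieAlgebra (R : Type*) [CommRing R] (X : Type*) (G : SimpleGraph X) :=
  FreeLieAlgebra R X ⧸ pcIdeal R G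

/-- The canonical image `ι x` of a generator `x : X` in `L_R(X; G)`. -/
def pcGen (R : Type*) [CommRing R] {X : Type*} (G : SimpleGraph X) (x : X) :
    PCLieAlgebra R X G :=
  LieSubmodule.Quotient.mk (N := pcIdeal R G) (FreeLieAlgebra.of R x)

/-- The Lie `R`-subalgebra `⟨Y⟩` of `L_R(X; G)` generated by `{ι y : y ∈ Y}`. -/
def genSpan (R : Type*) [CommRing R] {X : Type*} (G : SimpleGraph X) (Y : Set X) :
    LieSubalgebra R (PCLieAlgebra R X G) :=
  LieSubalgebra.lieSpan R (PCLieAlgebra R X G) (pcGen R G '' Y)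

/-- The complement graph on a subset `Y ⊆ X`: distinct vertices of `Y` are adjacent
iff they are not adjacent in `G`. -/
def complOn {X : Type*} (G : SimpleGraph X) (Y : Set X) : SimpleGraph Y where
  Adj a b := (a : X) ≠ (b : X) ∧ ¬ G.Adj a b
  symm := ⟨fun _ _ h => ⟨fun e => h.1 e.symm, fun e => h.2 e.symm⟩⟩
  loopless := ⟨fun _ h => h.1 rfl⟩

/-- The vertex set (as a subset of `X`) of a connected component of the
complement graph on `Y`. -/
def compSet {X : Type*} (G : SimpleGraph X) (Y : Set X)
    (c : (complOn G Y).ConnectedComponent) : Set X :=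
  {x : X | ∃ hx : x ∈ Y, (complOn G Y).connectedComponentMk ⟨x, hx⟩ = c}

/-- `Y` is the support of `g`: `g ∈ ⟨Y⟩`, and `Y ⊆ Z` whenever `g ∈ ⟨Z⟩`. -/
def isSupport (R : Type*) [CommRing R] {X : Type*} (G : SimpleGraph X)
    (g : PCLieAlgebra R X G) (Y : Set X) : Prop :=
  g ∈ genSpan R G Y ∧ ∀ Z : Set X, g ∈ genSpan R G Z → Y ⊆ Z

/-! ### Auxiliary two-step nilpotent Lie algebra detecting degree-two coefficients -/

open scoped Classical

/-- Kronecker delta. -/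
def pcDlt {R : Type*} [Zero R] [One R] {X : Type*} (x u : X) : R := if u = x then 1 else 0

/-- Auxiliary module: a "linear part" and a "quadratic part". -/
@[ext]
structure PCAuxM (R : Type*) (X : Type*) (G : SimpleGraph X) where
  lin : X → R
  quad : X → X → R

namespace PCAuxM

variable {R : Type*} [CommRing R] {X : Type*} {G : SimpleGraph X}

instance : Zero (PCAuxM R X G) := ⟨⟨0, 0⟩⟩
instance : Add (PCAuxM R X G) := ⟨fun a b => ⟨a.lin + b.lin, a.quad + b.quad⟩⟩
instance : Neg (PCAuxM R X G) := ⟨fun a => ⟨-a.lin, -a.quad⟩⟩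
instance : SMul R (PCAuxM R X G) := ⟨fun r a => ⟨r • a.lin, r • a.quad⟩⟩

@[simp] lemma zero_lin : (0 : PCAuxM R X G).lin = 0 := rfl
@[simp] lemma zero_quad : (0 : PCAuxM R X G).quad = 0 := rfl
@[simp] lemma add_lin (a b : PCAuxM R X G) : (a + b).lin = a.lin + b.lin := rfl
@[simp] lemma add_quad (a b : PCAuxM R X G) : (a + b).quad = a.quad + b.quad := rfl
@[simp] lemma neg_lin (a : PCAuxM R X G) : (-a).lin = -a.lin := rfl
@[simp] lemma neg_quad (a : PCAuxM R X G) : (-a).quad = -a.quad := rfl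
@[simp] lemma smul_lin (r : R) (a : PCAuxM R X G) : (r • a).lin = r • a.lin := rfl
@[simp] lemma smul_quad (r : R) (a : PCAuxM R X G) : (r • a).quad = r • a.quad := rfl

instance : AddCommGroup (PCAuxM R X G) where
  add_assoc a b c := by ext <;> simp [add_assoc]
  zero_add a := by ext <;> simp
  add_zero a := by ext <;> simp
  add_comm a b := by ext <;> simp [add_comm]
  neg_add_cancel a := by ext <;> simp
  nsmul := nsmulRec
  zsmul := zsmulRec

instance : Module R (PCAuxM R X G) where
  one_smul a := by ext <;> simp
  mul_smul r s a := by ext <;> simp [mul_assoc]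
  smul_zero r := by ext <;> simp
  smul_add r a b := by ext <;> simp [mul_add]
  add_smul r s a := by ext <;> simp [add_mul]
  zero_smul a := by ext <;> simp

/-- The "symplectic-like" form recording coefficients of the brackets of non-adjacent
generators. -/
def om (G : SimpleGraph X) (a b : X → R) : X → X → R :=
  fun u v => if G.Adj u v then 0 else a u * b v - a v * b u

lemma om_add_left (a a' b : X → R) : om G (a + a') b = om G a b + om G a' b := by
  funext u v; simp only [om, Pi.add_apply]; split <;> ring

lemma om_add_right (a b b' : X → R) : om G a (b + b') = om G a b + om G a b' := by
  funext u v; simp only [om, Pi.add_apply]; split <;> ring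

lemma om_smul_left (r : R) (a b : X → R) : om G (r • a) b = r • om G a b := by
  funext u v; simp only [om, Pi.smul_apply, smul_eq_mul]; split <;> ring

lemma om_smul_right (r : R) (a b : X → R) : om G a (r • b) = r • om G a b := by
  funext u v; simp only [om, Pi.smul_apply, smul_eq_mul]; split <;> ring

lemma om_self (a : X → R) : om G a a = 0 := by
  funext u v; simp only [om, Pi.zero_apply]; split <;> ring

lemma om_zero_left (b : X → R) : om G (0 : X → R) b = 0 := by
  funext u v; simp only [om, Pi.zero_apply]; split <;> ring

lemma om_zero_right (a : X → R) : om G a (0 : X → R) = 0 := by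
  funext u v; simp only [om, Pi.zero_apply]; split <;> ring

instance : Bracket (PCAuxM R X G) (PCAuxM R X G) :=
  ⟨fun a b => ⟨0, om G a.lin b.lin⟩⟩

@[simp] lemma bracket_lin (a b : PCAuxM R X G) : ⁅a, b⁆.lin = 0 := rfl
@[simp] lemma bracket_quad (a b : PCAuxM R X G) : ⁅a, b⁆.quad = om G a.lin b.lin := rfl

instance : LieRing (PCAuxM R X G) where
  add_lie a b c := by ext <;> simp [om_add_left]
  lie_add a b c := by ext <;> simp [om_add_right]
  lie_self a := by ext <;> simp [om_self]
  leibniz_lie a b c := by ext <;> simp [om_zero_left, om_zero_right]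

instance : LieAlgebra R (PCAuxM R X G) where
  lie_smul r a b := by ext <;> simp [om_smul_right]

end PCAuxM

section Phi

variable (R : Type*) [CommRing R] {X : Type*} (G : SimpleGraph X)



/-- The Lie algebra morphism from the free Lie algebra to the auxiliary algebra. -/
def pcPhi : FreeLieAlgebra R X →ₗ⁅R⁆ PCAuxM R X G :=
  FreeLieAlgebra.lift R (fun x => ⟨pcDlt x, 0⟩)

@[simp] lemma pcPhi_of (x : X) : pcPhi R G (FreeLieAlgebra.of R x) = ⟨pcDlt x, 0⟩ :=
  FreeLieAlgebra.lift_of_apply _ _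

/-- Taking the linear part is linear. -/
def pcLinM : PCAuxM R X G →ₗ[R] (X → R) where
  toFun := PCAuxM.lin
  map_add' _ _ := rfl
  map_smul' _ _ := rfl

lemma pcIdeal_le_ker : pcIdeal R G ≤ (pcPhi R G).ker := by
  rw [pcIdeal, LieSubmodule.lieSpan_le]
  rintro w ⟨x, y, hxy, rfl⟩
  rw [SetLike.mem_coe, LieHom.mem_ker, LieHom.map_lie, pcPhi_of, pcPhi_of]
  ext u v
  · rfl
  · simp only [PCAuxM.bracket_quad, PCAuxM.om, PCAuxM.zero_quad, Pi.zero_apply]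
    split
    · rfl
    · rename_i hne
      simp only [pcDlt]
      by_cases hux : u = x <;> by_cases hvy : v = y <;>
        by_cases huy : u = y <;> by_cases hvx : v = x <;>
        simp_all <;> first
        | (exact (hne hxy).elim)
        | (exact (hne hxy.symm).elim)

end Phi

section Comb

variable {R : Type*} [CommRing R] [IsDomain R] {X : Type*} {G : SimpleGraph X}
variable {Y : Finset X} {α β : X → R}

/-- Propagation of proportionality along walks in the complement graph. -/
lemma pc_reach_prop (hα : ∀ y ∈ Y, α y ≠ 0)
    (hrel : ∀ u v : X, u ∈ Y → v ∈ Y → ¬ G.Adj u v → α u * β v = α v * β u)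
    {u v : (Y : Set X)} (h : (complOn G (Y : Set X)).Reachable u v) :
    β (u : X) * α (v : X) = α (u : X) * β (v : X) ∧ (β (u : X) = 0 → β (v : X) = 0) := by
  obtain ⟨w⟩ := h
  induction w with
  | nil => exact ⟨mul_comm _ _, fun h => h⟩
  | @cons a b c hadj p ih =>
    have hab : α (a : X) * β (b : X) = α (b : X) * β (a : X) :=
      hrel a b (Finset.mem_coe.mp a.2) (Finset.mem_coe.mp b.2) hadj.2
    have hαa : α (a : X) ≠ 0 := hα _ (Finset.mem_coe.mp a.2)
    have hαb : α (b : X) ≠ 0 := hα _ (Finset.mem_coe.mp b.2)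
    constructor
    · by_cases hb : β (b : X) = 0
      · have hba : β (a : X) = 0 := by
          have h0 : α (b : X) * β (a : X) = 0 := by rw [← hab, hb, mul_zero]
          rcases mul_eq_zero.mp h0 with h | h
          · exact absurd h hαb
          · exact h
        have hbv : β (c : X) = 0 := ih.2 hb
        rw [hba, hbv]; ring
      · have key : β (b : X) * (β (a : X) * α (c : X) - α (a : X) * β (c : X)) = 0 := by
          linear_combination (β (a : X)) * ih.1 - (β (c : X)) * hab
        rcases mul_eq_zero.mp key with h | h
        · exact absurd h hb
        · exact sub_eq_zero.mp h
    · intro ha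
      apply ih.2
      have h0 : α (a : X) * β (b : X) = 0 := by rw [hab, ha, mul_zero]
      rcases mul_eq_zero.mp h0 with h | h
      · exact absurd h hαa
      · exact h

/-- From the componentwise proportionality condition, deduce the edge relations. -/
lemma pc_edge_rel (hα : ∀ y ∈ Y, α y ≠ 0)
    (h1 : ∀ c : (complOn G (Y : Set X)).ConnectedComponent,
        ∃ lam mu : R, ¬(lam = 0 ∧ mu = 0) ∧
          ∀ y : (Y : Set X), (complOn G (Y : Set X)).connectedComponentMk y = c →
            lam * α y = mu * β y)
    {u v : X} (hu : u ∈ Y) (hv : v ∈ Y) (hadj : ¬ G.Adj u v) :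
    α u * β v = α v * β u := by
  by_cases huv : u = v
  · subst huv; ring
  · set u' : (Y : Set X) := ⟨u, Finset.mem_coe.mpr hu⟩
    set v' : (Y : Set X) := ⟨v, Finset.mem_coe.mpr hv⟩
    have hadj' : (complOn G (Y : Set X)).Adj u' v' := ⟨huv, hadj⟩
    obtain ⟨lam, mu, hne, hprop⟩ :=
      h1 ((complOn G (Y : Set X)).connectedComponentMk u')
    have hru : lam * α u = mu * β u := hprop u' rfl
    have hrv : lam * α v = mu * β v :=
      hprop v' (SimpleGraph.ConnectedComponent.connectedComponentMk_eq_of_adj hadj'.symm)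
    have hmu : mu ≠ 0 := by
      intro hmu0
      have hlam : lam ≠ 0 := fun hl => hne ⟨hl, hmu0⟩
      rw [hmu0, zero_mul] at hru
      rcases mul_eq_zero.mp hru with h | h
      · exact hlam h
      · exact hα u hu h
    apply mul_left_cancel₀ hmu
    linear_combination (α v) * hru - (α u) * hrv

end Comb

/-- The bracket of two adjacent generators vanishes in the partially commutative
Lie algebra. -/
lemma pcGen_bracket_adj (R : Type*) [CommRing R] {X : Type*} (G : SimpleGraph X)
    {u v : X} (h : G.Adj u v) : ⁅pcGen R G u, pcGen R G v⁆ = 0 := by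
  rw [pcGen, pcGen, ← LieSubmodule.Quotient.mk_bracket, LieSubmodule.Quotient.mk_eq_zero']
  exact LieSubmodule.subset_lieSpan ⟨u, v, h, rfl⟩

/-- Characterization of the linear combinations of generators commuting with
`g = Σ_{y ∈ Y} α y • ι y` (all `α y ≠ 0`): `⁅g, h⁆ = 0` for `h = Σ_{x ∈ X} β x • ι x`
iff on each connected component of the complement graph on `Y` the coefficients of `h`
are proportional to those of `g`, and every generator outside `Y` occurring in `h`
with a nonzero coefficient is adjacent to all of `Y`. -/
theorem bracket_lin_comb_eq_zero_iff
    (R : Type*) [CommRing R] [IsDomain R] (X : Type*) [Fintype X] (G : SimpleGraph X)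
    (Y : Finset X) (α β : X → R) (hα : ∀ y ∈ Y, α y ≠ 0) :
    ⁅∑ y ∈ Y, α y • pcGen R G y, ∑ x : X, β x • pcGen R G x⁆ = 0 ↔
      ((∀ c : (complOn G (Y : Set X)).ConnectedComponent,
          ∃ lam mu : R, ¬(lam = 0 ∧ mu = 0) ∧
            ∀ y : (Y : Set X), (complOn G (Y : Set X)).connectedComponentMk y = c →
              lam * α y = mu * β y) ∧
        (∀ z : X, z ∉ Y → β z ≠ 0 → ∀ y ∈ Y, G.Adj z y)) := by
  constructor
  · -- forward direction
    intro h0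
    -- move to the free Lie algebra
    set gF : FreeLieAlgebra R X := ∑ y ∈ Y, α y • FreeLieAlgebra.of R y with hgF
    set hF : FreeLieAlgebra R X := ∑ x : X, β x • FreeLieAlgebra.of R x with hhF
    have hg : (∑ y ∈ Y, α y • pcGen R G y) =
        LieSubmodule.Quotient.mk' (pcIdeal R G) gF := by
      symm
      show (LieSubmodule.Quotient.mk' (pcIdeal R G)).toLinearMap gF = _
      rw [hgF, map_sum]
      exact Finset.sum_congr rfl fun y _ => by rw [map_smul]; rfl
    have hh : (∑ x : X, β x • pcGen R G x) =
        LieSubmodule.Quotient.mk' (pcIdeal R G) hF := by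
      symm
      show (LieSubmodule.Quotient.mk' (pcIdeal R G)).toLinearMap hF = _
      rw [hhF, map_sum]
      exact Finset.sum_congr rfl fun x _ => by rw [map_smul]; rfl
    have hmem : ⁅gF, hF⁆ ∈ pcIdeal R G := by
      rw [← LieSubmodule.Quotient.mk_eq_zero (pcIdeal R G)]
      have : (LieSubmodule.Quotient.mk' (pcIdeal R G)) ⁅gF, hF⁆ =
          ⁅(LieSubmodule.Quotient.mk' (pcIdeal R G)) gF,
            (LieSubmodule.Quotient.mk' (pcIdeal R G)) hF⁆ :=
        LieSubmodule.Quotient.mk_bracket _ _ _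
      rw [this, ← hg, ← hh, h0]
    have hker : pcPhi R G ⁅gF, hF⁆ = 0 :=
      LieHom.mem_ker.mp (pcIdeal_le_ker R G hmem)
    -- compute the linear parts of the images
    classical
    have hEg : (pcPhi R G gF).lin = fun u => if u ∈ Y then α u else 0 := by
      funext u
      have : (pcPhi R G gF).lin = (pcLinM R G).comp (pcPhi R G).toLinearMap gF := rfl
      rw [this, hgF, map_sum]
      have : ∀ y ∈ Y, ((pcLinM R G).comp (pcPhi R G).toLinearMap) (α y • FreeLieAlgebra.of R y)
          = α y • pcDlt (R := R) y := by
        intro y _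
        rw [map_smul]
        congr 1
        show (pcPhi R G (FreeLieAlgebra.of R y)).lin = _
        rw [pcPhi_of]
      rw [Finset.sum_congr rfl this, Finset.sum_apply]
      simp only [Pi.smul_apply, smul_eq_mul, pcDlt, mul_ite, mul_one, mul_zero]
      rw [Finset.sum_ite_eq Y u α]
    have hEh : (pcPhi R G hF).lin = β := by
      funext u
      have : (pcPhi R G hF).lin = (pcLinM R G).comp (pcPhi R G).toLinearMap hF := rfl
      rw [this, hhF, map_sum]
      have : ∀ x ∈ Finset.univ,
          ((pcLinM R G).comp (pcPhi R G).toLinearMap) (β x • FreeLieAlgebra.of R x)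
          = β x • pcDlt (R := R) x := by
        intro x _
        rw [map_smul]
        congr 1
        show (pcPhi R G (FreeLieAlgebra.of R x)).lin = _
        rw [pcPhi_of]
      rw [Finset.sum_congr rfl this, Finset.sum_apply]
      simp only [Pi.smul_apply, smul_eq_mul, pcDlt, mul_ite, mul_one, mul_zero]
      rw [Finset.sum_ite_eq Finset.univ u β, if_pos (Finset.mem_univ u)]
    have hom0 : ∀ u v : X, ¬ G.Adj u v →
        (if u ∈ Y then α u else 0) * β v = (if v ∈ Y then α v else 0) * β u := by
      intro u v huv
      have hq : (pcPhi R G ⁅gF, hF⁆).quad u v = 0 := by rw [hker]; rfl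
      rw [LieHom.map_lie] at hq
      rw [PCAuxM.bracket_quad, PCAuxM.om, hEg, hEh] at hq
      rw [if_neg huv] at hq
      exact sub_eq_zero.mp hq
    -- derive the two conditions
    have hrel : ∀ u v : X, u ∈ Y → v ∈ Y → ¬ G.Adj u v → α u * β v = α v * β u := by
      intro u v hu hv huv
      have := hom0 u v huv
      rwa [if_pos hu, if_pos hv] at this
    have hcond2 : ∀ z : X, z ∉ Y → β z ≠ 0 → ∀ y ∈ Y, G.Adj z y := by
      intro z hz hbz y hy
      by_contra hadj
      have hyz : ¬ G.Adj y z := fun h => hadj h.symm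
      have := hom0 y z hyz
      rw [if_pos hy, if_neg hz, zero_mul] at this
      rcases mul_eq_zero.mp this with h | h
      · exact hα y hy h
      · exact hbz h
    refine ⟨?_, hcond2⟩
    intro c
    obtain ⟨y0, hy0⟩ := c.exists_rep
    by_cases hb0 : β (y0 : X) = 0
    · refine ⟨0, 1, by simp, fun y hy => ?_⟩
      have hreach : (complOn G (Y : Set X)).Reachable y0 y :=
        SimpleGraph.ConnectedComponent.exact (hy0.trans hy.symm)
      have := (pc_reach_prop hα hrel hreach).2 hb0
      rw [this, zero_mul, mul_zero]
    · refine ⟨β (y0 : X), α (y0 : X), fun hc => hb0 hc.1, fun y hy => ?_⟩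
      have hreach : (complOn G (Y : Set X)).Reachable y0 y :=
        SimpleGraph.ConnectedComponent.exact (hy0.trans hy.symm)
      exact (pc_reach_prop hα hrel hreach).1
  · -- backward direction
    rintro ⟨h1, h2⟩
    classical
    set hS := ∑ x : X, β x • pcGen R G x with hhS
    have expand : ⁅∑ y ∈ Y, α y • pcGen R G y, hS⁆ =
        ∑ y ∈ Y, ∑ x : X, (α y * β x) • ⁅pcGen R G y, pcGen R G x⁆ := by
      have e1 : ⁅∑ y ∈ Y, α y • pcGen R G y, hS⁆ = ∑ y ∈ Y, ⁅α y • pcGen R G y, hS⁆ :=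
        map_sum (AddMonoidHom.mk' (fun w => ⁅w, hS⁆) (fun a b => add_lie a b hS))
          (fun y => α y • pcGen R G y) Y
      rw [e1]
      refine Finset.sum_congr rfl fun y _ => ?_
      have e2 : ⁅α y • pcGen R G y, hS⁆ =
          ∑ x : X, ⁅α y • pcGen R G y, β x • pcGen R G x⁆ := by
        rw [hhS]
        exact map_sum (AddMonoidHom.mk' (fun w => ⁅α y • pcGen R G y, w⁆)
          (fun a b => lie_add _ a b)) (fun x => β x • pcGen R G x) Finset.univ
      rw [e2]
      refine Finset.sum_congr rfl fun x _ => ?_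
      rw [smul_lie, lie_smul, smul_smul]
    rw [expand]
    have hinner : ∀ y ∈ Y, ∑ x : X, (α y * β x) • ⁅pcGen R G y, pcGen R G x⁆ =
        ∑ x ∈ Y, (α y * β x) • ⁅pcGen R G y, pcGen R G x⁆ := by
      intro y hy
      symm
      apply Finset.sum_subset (Finset.subset_univ Y)
      intro x _ hx
      by_cases hadj : G.Adj y x
      · rw [pcGen_bracket_adj R G hadj, smul_zero]
      · have hbx : β x = 0 := by
          by_contra hbx
          exact hadj ((h2 x hx hbx y hy).symm)
        rw [hbx, mul_zero, zero_smul]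
    rw [Finset.sum_congr rfl hinner, ← Finset.sum_product']
    apply Finset.sum_involution (g := fun p _ => (p.2, p.1))
    · rintro ⟨u, v⟩ hp
      simp only
      by_cases hadj : G.Adj u v
      · rw [pcGen_bracket_adj R G hadj, pcGen_bracket_adj R G hadj.symm]
        simp
      · by_cases huv : u = v
        · subst huv
          simp
        · rw [Finset.mem_product] at hp
          have hrel : α u * β v = α v * β u := pc_edge_rel hα h1 hp.1 hp.2 hadj
          have hskew : ⁅pcGen R G v, pcGen R G u⁆ = -⁅pcGen R G u, pcGen R G v⁆ := by
            rw [← lie_skew]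
          rw [hskew, hrel, smul_neg, add_neg_cancel]
    · rintro ⟨u, v⟩ hp hfp heq
      apply hfp
      have huv : u = v := by
        have := (Prod.ext_iff.mp heq).1
        simpa using this.symm
      subst huv
      rw [lie_self, smul_zero]
    · rintro ⟨u, v⟩ hp
      rw [Finset.mem_product] at hp ⊢
      exact ⟨hp.2, hp.1⟩
    · rintro ⟨u, v⟩ hp
      rfl
end
end

section
/- If x, y ∈ X are distinct and not adjacent in G (i.e. ¬Adj x y), then ⁅ι x, ι y⁆ ≠ 0 in L. -/
noncomputable section

/-- Brackets of distinct non-adjacent generators are nonzero in `L_R(X; G)`. -/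
theorem bracket_generators_ne_zero
    (R : Type*) [CommRing R] [IsDomain R] (X : Type*) [Fintype X] (G : SimpleGraph X)
    (x y : X) (hxy : x ≠ y) (hadj : ¬ G.Adj x y) :
    ⁅pcGen R G x, pcGen R G y⁆ ≠ 0 := by
  classical
  letI : LieRing (Matrix (Fin 3) (Fin 3) R) := LieRing.ofAssociativeRing
  -- Target: 3×3 matrices over R with commutator bracket.
  set f : X → Matrix (Fin 3) (Fin 3) R := fun a =>
    if a = x then Matrix.single 0 1 (1 : R)
    else if a = y then Matrix.single 1 2 (1 : R) else 0 with hf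
  set φ : FreeLieAlgebra R X →ₗ⁅R⁆ Matrix (Fin 3) (Fin 3) R :=
    FreeLieAlgebra.lift R f with hφ
  have hker : pcIdeal R G ≤ φ.ker := by
    rw [pcIdeal, LieSubmodule.lieSpan_le]
    rintro w ⟨a, b, hab, rfl⟩
    rw [SetLike.mem_coe, LieHom.mem_ker]
    have hab' : a ≠ b := hab.ne
    have key : f a = 0 ∨ f b = 0 := by
      by_cases ha : a = x
      · right
        have hbx : b ≠ x := fun h => hab' (ha.trans h.symm)
        have hby : b ≠ y := fun h => hadj (by rw [← ha, ← h]; exact hab)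
        simp [hf, hbx, hby]
      · by_cases hay : a = y
        · right
          have hbx : b ≠ x := fun h => hadj (by rw [← hay, ← h]; exact hab.symm)
          have hby : b ≠ y := fun h => hab' (hay.trans h.symm)
          simp [hf, hbx, hby]
        · left; simp [hf, ha, hay]
    rw [LieHom.map_lie, hφ, FreeLieAlgebra.lift_of_apply, FreeLieAlgebra.lift_of_apply]
    rcases key with h | h <;> rw [h] <;> simp
  intro hzero
  have hmk : (⁅pcGen R G x, pcGen R G y⁆ : PCLieAlgebra R X G)
      = LieSubmodule.Quotient.mk (N := pcIdeal R G)
          ⁅FreeLieAlgebra.of R x, FreeLieAlgebra.of R y⁆ := by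
    rw [pcGen, pcGen, ← LieSubmodule.Quotient.mk_bracket]
  have hmem : ⁅FreeLieAlgebra.of R x, FreeLieAlgebra.of R y⁆ ∈ pcIdeal R G := by
    rw [← LieSubmodule.Quotient.mk_eq_zero', ← hmk]
    exact hzero
  have h0 : φ ⁅FreeLieAlgebra.of R x, FreeLieAlgebra.of R y⁆ = 0 :=
    LieHom.mem_ker.mp (hker hmem)
  rw [LieHom.map_lie, hφ, FreeLieAlgebra.lift_of_apply, FreeLieAlgebra.lift_of_apply] at h0
  have hfx : f x = Matrix.single 0 1 (1 : R) := by simp [hf]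
  have hfy : f y = Matrix.single 1 2 (1 : R) := by simp [hf, hxy.symm]
  rw [hfx, hfy, Ring.lie_def] at h0
  have h1 := congrFun (congrFun h0 0) 2
  simp [Matrix.mul_apply, Matrix.sub_apply, Matrix.single,
    Fin.sum_univ_three] at h1
end
end

section
/- Let Y ⊆ X and let t be an element of the free magma on X (a formal nonassociative bracketing of a nonempty word in the letters X); let ev(t) ∈ L be the evaluation of t obtained by sending each letter x to ι x and magma multiplication to the Lie bracket of L, and let letters(t) ⊆ X be the set of letters occurring in t. If letters(t) ⊆ Y and ev(t) ≠ 0, then letters(t) is contained in the vertex set of a single connected component of the complement graph on Y. -/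
noncomputable section

/-- Evaluation of a formal nonassociative word in the letters `X` in the partially
commutative Lie algebra: letters go to generators, magma multiplication to the bracket. -/
def magmaEval (R : Type*) [CommRing R] {X : Type*} (G : SimpleGraph X) :
    FreeMagma X → PCLieAlgebra R X G
  | FreeMagma.of x => pcGen R G x
  | FreeMagma.mul a b => ⁅magmaEval R G a, magmaEval R G b⁆

/-- The set of letters occurring in a formal nonassociative word. -/
def magmaLetters {X : Type*} : FreeMagma X → Set X
  | FreeMagma.of x => {x}
  | FreeMagma.mul a b => magmaLetters a ∪ magmaLetters b


lemma pcGen_bracket_eq_zero {R : Type*} [CommRing R] {X : Type*} {G : SimpleGraph X}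
    {x y : X} (h : G.Adj x y) : ⁅pcGen R G x, pcGen R G y⁆ = 0 := by
  rw [pcGen, pcGen, ← LieSubmodule.Quotient.mk_bracket,
    LieSubmodule.Quotient.mk_eq_zero']
  exact LieSubmodule.subset_lieSpan ⟨x, y, h, rfl⟩

lemma eval_bracket_gen_eq_zero {R : Type*} [CommRing R] {X : Type*} {G : SimpleGraph X}
    (a : FreeMagma X) (y : X)
    (h : ∀ x ∈ magmaLetters a, ⁅pcGen R G x, pcGen R G y⁆ = 0) :
    ⁅magmaEval R G a, pcGen R G y⁆ = 0 := by
  induction a with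
  | ih1 x => exact h x rfl
  | ih2 a b iha ihb =>
      have ha := iha (fun x hx => h x (Or.inl hx))
      have hb := ihb (fun x hx => h x (Or.inr hx))
      show ⁅⁅magmaEval R G a, magmaEval R G b⁆, pcGen R G y⁆ = 0
      rw [lie_lie, ha, hb]; simp

lemma eval_bracket_eval_eq_zero {R : Type*} [CommRing R] {X : Type*} {G : SimpleGraph X}
    (a b : FreeMagma X)
    (h : ∀ x ∈ magmaLetters a, ∀ y ∈ magmaLetters b, ⁅pcGen R G x, pcGen R G y⁆ = 0) :
    ⁅magmaEval R G a, magmaEval R G b⁆ = 0 := by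
  induction b with
  | ih1 y => exact eval_bracket_gen_eq_zero a y (fun x hx => h x hx y rfl)
  | ih2 b1 b2 ih1 ih2 =>
      have h1 := ih1 (fun x hx y hy => h x hx y (Or.inl hy))
      have h2 := ih2 (fun x hx y hy => h x hx y (Or.inr hy))
      show ⁅magmaEval R G a, ⁅magmaEval R G b1, magmaEval R G b2⁆⁆ = 0
      rw [leibniz_lie, h1, h2, zero_lie, lie_zero, add_zero]

/-- If a nonassociative word in letters from `Y` evaluates to a nonzero element of
`L_R(X; G)`, then all its letters lie in a single connected component of the
complement graph on `Y`. -/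
theorem letters_in_single_component
    (R : Type*) [CommRing R] [IsDomain R] (X : Type*) [Fintype X] (G : SimpleGraph X)
    (Y : Set X) (t : FreeMagma X)
    (hlet : magmaLetters t ⊆ Y) (hne : magmaEval R G t ≠ 0) :
    ∃ c : (complOn G Y).ConnectedComponent, magmaLetters t ⊆ compSet G Y c := by
  induction t with
  | ih1 x =>
      have hx : x ∈ Y := hlet rfl
      exact ⟨(complOn G Y).connectedComponentMk ⟨x, hx⟩,
        fun z hz => by rw [Set.mem_singleton_iff.mp hz]; exact ⟨hx, rfl⟩⟩
  | ih2 a b iha ihb =>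
      have hla : magmaLetters a ⊆ Y := fun z hz => hlet (Or.inl hz)
      have hlb : magmaLetters b ⊆ Y := fun z hz => hlet (Or.inr hz)
      have hevt : magmaEval R G (a * b) = ⁅magmaEval R G a, magmaEval R G b⁆ := rfl
      have hna : magmaEval R G a ≠ 0 := fun h0 => hne (by rw [hevt, h0, zero_lie])
      have hnb : magmaEval R G b ≠ 0 := fun h0 => hne (by rw [hevt, h0, lie_zero])
      obtain ⟨c, hc⟩ := iha hla hna
      obtain ⟨c', hc'⟩ := ihb hlb hnb
      by_cases hcc : c = c'
      · exact ⟨c, fun z hz => hz.elim (fun h => hc h) (fun h => hcc ▸ hc' h)⟩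
      · exfalso
        apply hne
        rw [hevt]
        apply eval_bracket_eval_eq_zero
        intro x hx y hy
        apply pcGen_bracket_eq_zero
        obtain ⟨hxY, hxc⟩ := hc hx
        obtain ⟨hyY, hyc⟩ := hc' hy
        by_contra hadj
        apply hcc
        have hxy : x ≠ y := by
          rintro rfl
          exact hcc (hxc ▸ hyc ▸ rfl)
        have : (complOn G Y).Adj ⟨x, hxY⟩ ⟨y, hyY⟩ := ⟨hxy, hadj⟩
        rw [← hxc, ← hyc]
        exact SimpleGraph.ConnectedComponent.connectedComponentMk_eq_of_adj this
end
end
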